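/- If matrices A and B are balanced elementary equivalent, i.e., there exist nonnegative integer matrices S, R_A, R_B with A = S·R_A, B = S·R_B, and R_A·S = R_B·S, then det(A) = det(B). -/
import Mathlib


/-- Balanced elementary equivalent matrices (over ℤ, with nonnegative entries)
have equal determinants. -/
theorem balanced_elementary_equivalent_det_eq
    {n m : ℕ} (A B : Matrix (Fin n) (Fin n) ℤ)
    (S : Matrix (Fin n) (Fin m) ℤ) (RA RB : Matrix (Fin m) (Fin n) ℤ)
    (hSpos : ∀ i j, 0 ≤ S i j) (hRApos : ∀ i j, 0 ≤ RA i j) (hRBpos : ∀ i j, 0 ≤ RB i j)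
    (hA : A = S * RA) (hB : B = S * RB) (hbal : RA * S = RB * S) :
    A.det = B.det := by
  subst hA hB
  classical
  set R := Polynomial ℤ
  let K := FractionRing R
  let φ : R →+* K := algebraMap R K
  have hφinj : Function.Injective φ := IsFractionRing.injective R K
  let ψ : ℤ →+* R := Polynomial.C
  let χ : ℤ →+* K := φ.comp ψ
  set x : K := φ Polynomial.X with hxdef
  have hx : x ≠ 0 := by
    intro h
    exact Polynomial.X_ne_zero (hφinj (by simpa using h))
  -- key identity in K
  have key : ∀ RC : Matrix (Fin m) (Fin n) ℤ,
      Matrix.det (x • (1 : Matrix (Fin n) (Fin n) K) + (S.map χ) * (RC.map χ))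
        = x ^ n * Matrix.det (1 + x⁻¹ • ((RC.map χ) * (S.map χ))) := by
    intro RC
    have h1 : x • (1 : Matrix (Fin n) (Fin n) K) + (S.map χ) * (RC.map χ)
        = x • (1 + x⁻¹ • ((S.map χ) * (RC.map χ))) := by
      rw [smul_add, smul_smul, mul_inv_cancel₀ hx, one_smul]
    rw [h1, Matrix.det_smul, Fintype.card_fin]
    congr 1
    rw [← Matrix.smul_mul, Matrix.det_one_add_mul_comm, Matrix.mul_smul]
  -- matrices over R whose determinants we compare
  set P : Matrix (Fin m) (Fin n) ℤ → Matrix (Fin n) (Fin n) R :=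
    fun RC => Matrix.diagonal (fun _ => Polynomial.X) + (S * RC).map ψ with hP
  have hmapφ : ∀ RC : Matrix (Fin m) (Fin n) ℤ,
      (P RC).map φ = x • (1 : Matrix (Fin n) (Fin n) K) + (S.map χ) * (RC.map χ) := by
    intro RC
    rw [hP, Matrix.smul_one_eq_diagonal, Matrix.map_add _ (map_add φ), Matrix.map_map,
      Matrix.diagonal_map (map_zero φ)]
    congr 1
    rw [show (⇑φ ∘ ⇑ψ) = ⇑χ from rfl, Matrix.map_mul]
  have hbal' : (RA.map χ) * (S.map χ) = (RB.map χ) * (S.map χ) := by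
    rw [← Matrix.map_mul, ← Matrix.map_mul, hbal]
  have hdetK : φ (P RA).det = φ (P RB).det := by
    rw [φ.map_det, φ.map_det, RingHom.mapMatrix_apply, RingHom.mapMatrix_apply,
      hmapφ, hmapφ, key, key, hbal']
  have hdetR : (P RA).det = (P RB).det := hφinj hdetK
  have heval : ∀ RC : Matrix (Fin m) (Fin n) ℤ,
      Polynomial.eval 0 (P RC).det = (S * RC).det := by
    intro RC
    rw [← Polynomial.coe_evalRingHom, RingHom.map_det, RingHom.mapMatrix_apply]
    congr 1
    rw [hP, Matrix.map_add _ (map_add (Polynomial.evalRingHom (0:ℤ))), Matrix.map_map,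
      Matrix.diagonal_map (map_zero (Polynomial.evalRingHom (0:ℤ)))]
    have hid : (Polynomial.eval (0:ℤ) ∘ ⇑Polynomial.C) = id := funext fun a => Polynomial.eval_C
    simp only [ψ, Polynomial.coe_evalRingHom, hid, Matrix.map_id, Polynomial.eval_X,
      Matrix.diagonal_zero, zero_add]
  rw [← heval RA, ← heval RB, hdetR]
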